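/- Let p > q be odd primes and let G be a finite group. If G embeds transitively in Hol(C_{2pq}), then G also embeds transitively in Hol(C_p × D_q), in Hol(C_q × D_p), and in Hol(D_{pq}), where C_{2pq} = Multiplicative (ZMod (2*p*q)), C_p × D_q = Multiplicative (ZMod p) × DihedralGroup q, C_q × D_p = Multiplicative (ZMod q) × DihedralGroup p, and D_{pq} = DihedralGroup (p*q). -/

import Mathlib

/-- The left regular representation of a group `N` in `Equiv.Perm N`. -/
def leftReg (N : Type*) [Group N] : N →* Equiv.Perm N :=
  MulAction.toPermHom N N

/-- The holomorph of `N`: the normalizer of the image of the left regular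
representation inside `Equiv.Perm N`. -/
def Hol (N : Type*) [Group N] : Subgroup (Equiv.Perm N) :=
  Subgroup.normalizer ((leftReg N).range : Set (Equiv.Perm N))

/-- A subgroup of `Equiv.Perm N` is transitive on `N`. -/
def IsTransitiveSubgroup {N : Type*} [Group N] (M : Subgroup (Equiv.Perm N)) : Prop :=
  ∀ a b : N, ∃ g ∈ M, g a = b

/-- A group `G` embeds transitively in `Hol(N)` if there is an injective
homomorphism `G →* Equiv.Perm N` whose range lies in `Hol(N)` and is
transitive on `N`. -/
def EmbedsTransitively (G : Type*) [Group G] (N : Type*) [Group N] : Prop :=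
  ∃ φ : G →* Equiv.Perm N, Function.Injective φ ∧ φ.range ≤ Hol N ∧
    IsTransitiveSubgroup φ.range

lemma leftReg_apply {N : Type*} [Group N] (n x : N) : leftReg N n x = n * x := rfl

/-- Every element of the holomorph is an affine map `x ↦ c * α x`. -/
lemma hol_decomp {N : Type*} [Group N] {g : Equiv.Perm N} (hg : g ∈ Hol N) :
    ∃ (c : N) (α : N →* N), Function.Bijective α ∧ ∀ x, g x = c * α x := by
  have key : ∀ m y : N, g (m * y) = g m * (g 1)⁻¹ * g y := by
    intro m y
    have h1 : g * leftReg N m * g⁻¹ ∈ (leftReg N).range :=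
      (Subgroup.mem_normalizer_iff.mp hg (leftReg N m)).mp ⟨m, rfl⟩
    obtain ⟨d, hd⟩ := h1
    have h2 : ∀ x : N, d * x = g (m * g⁻¹ x) := by
      intro x
      have := congrArg (fun (σ : Equiv.Perm N) => σ x) hd
      simpa [leftReg_apply, Equiv.Perm.mul_apply] using this
    have h3 : d = g m * (g 1)⁻¹ := by
      have := h2 (g 1)
      rw [Equiv.Perm.inv_def, Equiv.symm_apply_apply, mul_one] at this
      rw [← this]; group
    have := h2 (g y)
    rw [Equiv.Perm.inv_def, Equiv.symm_apply_apply, h3] at this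
    rw [← this]
  refine ⟨g 1, MonoidHom.mk' (fun x => (g 1)⁻¹ * g x) ?_, ?_, ?_⟩
  · intro m y
    show (g 1)⁻¹ * g (m * y) = ((g 1)⁻¹ * g m) * ((g 1)⁻¹ * g y)
    rw [key m y]; group
  · exact (Equiv.mulLeft ((g 1)⁻¹)).bijective.comp g.bijective
  · intro x
    simp [MonoidHom.mk'_apply]

private def permCongrMulEquiv {α β : Type*} (e : α ≃ β) : Equiv.Perm α ≃* Equiv.Perm β :=
  { e.permCongr with
    map_mul' := by
      intro σ τ
      ext x
      simp [Equiv.permCongr_apply, Equiv.Perm.mul_apply] }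

lemma permCongrMulEquiv_apply {α β : Type*} (e : α ≃ β) (p : Equiv.Perm α) (x : β) :
    permCongrMulEquiv e p x = e (p (e.symm x)) := rfl

/-- Main transfer lemma: if `ψ : N₂ →* Perm N₁` is regular (its image is a regular
subgroup) and its range is normalized by `Hol N₁`, then transitive embeddings transfer. -/
lemma transfer {G N₁ N₂ : Type*} [Group G] [Group N₁] [Group N₂]
    (ψ : N₂ →* Equiv.Perm N₁)
    (hbij : Function.Bijective (fun n : N₂ => ψ n 1))
    (hnorm : ∀ g ∈ Hol N₁, ∀ n : N₂, g * ψ n * g⁻¹ ∈ ψ.range)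
    (h : EmbedsTransitively G N₁) : EmbedsTransitively G N₂ := by
  obtain ⟨φ, hinj, hhol, htrans⟩ := h
  let e : N₂ ≃ N₁ := Equiv.ofBijective _ hbij
  let Ξ : Equiv.Perm N₂ ≃* Equiv.Perm N₁ := permCongrMulEquiv e
  have he : ∀ y : N₂, e y = ψ y 1 := fun _ => rfl
  have key : ∀ n : N₂, Ξ (leftReg N₂ n) = ψ n := by
    intro n
    ext x
    show e (leftReg N₂ n (e.symm x)) = ψ n x
    rw [leftReg_apply, he, map_mul, Equiv.Perm.mul_apply, ← he, e.apply_symm_apply]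
  have lemA : ∀ τ : Equiv.Perm N₂, τ ∈ (leftReg N₂).range ↔ Ξ τ ∈ ψ.range := by
    intro τ
    constructor
    · rintro ⟨n, rfl⟩; exact ⟨n, (key n).symm⟩
    · rintro ⟨n, hn⟩
      exact ⟨n, Ξ.injective (by rw [key n, hn])⟩
  refine ⟨Ξ.symm.toMonoidHom.comp φ, ?_, ?_, ?_⟩
  · exact Ξ.symm.injective.comp hinj
  · rintro σ ⟨g, rfl⟩
    have hg : φ g ∈ Hol N₁ := hhol ⟨g, rfl⟩
    show Ξ.symm (φ g) ∈ Hol N₂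
    rw [Hol, Subgroup.mem_normalizer_iff]
    intro τ
    rw [lemA τ, lemA (Ξ.symm (φ g) * τ * (Ξ.symm (φ g))⁻¹)]
    have hΞ : Ξ (Ξ.symm (φ g) * τ * (Ξ.symm (φ g))⁻¹) = φ g * Ξ τ * (φ g)⁻¹ := by
      simp [map_mul]
    rw [hΞ]
    constructor
    · rintro ⟨n, hn⟩
      rw [← hn]
      exact hnorm _ hg n
    · rintro ⟨n, hn⟩
      have h2 := hnorm _ (Subgroup.inv_mem _ hg) n
      rw [inv_inv] at h2
      have : Ξ τ = (φ g)⁻¹ * ψ n * φ g := by rw [hn]; group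
      rw [this]
      exact h2
  · intro a b
    obtain ⟨σ, hσr, hσ⟩ := htrans (e a) (e b)
    obtain ⟨g, rfl⟩ := hσr
    refine ⟨Ξ.symm (φ g), ⟨g, rfl⟩, ?_⟩
    apply e.injective
    have : Ξ (Ξ.symm (φ g)) = φ g := Ξ.apply_symm_apply _
    calc e (Ξ.symm (φ g) a) = Ξ (Ξ.symm (φ g)) (e a) := by
          show _ = e ((Ξ.symm (φ g)) (e.symm (e a)))
          rw [e.symm_apply_apply]
      _ = (φ g) (e a) := by rw [this]
      _ = e b := hσ

section Master

variable (A : Type*) [CommGroup A] (b : ℕ)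

abbrev CC := A × Multiplicative (ZMod 2 × ZMod b)

def iotaP : Equiv.Perm (CC A b) :=
  (MulEquiv.prodCongr (MulEquiv.refl A) (MulEquiv.inv (Multiplicative (ZMod 2 × ZMod b)))).toEquiv

lemma iotaP_apply (c : CC A b) : iotaP A b c = (c.1, c.2⁻¹) := rfl

lemma iotaP_mul (x y : CC A b) : iotaP A b (x * y) = iotaP A b x * iotaP A b y := by
  simp [iotaP_apply, Prod.ext_iff, mul_comm]

lemma iotaP_iota (x : CC A b) : iotaP A b (iotaP A b x) = x := by
  simp [iotaP_apply]

def psiFun : A × DihedralGroup b → Equiv.Perm (CC A b)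
  | (a, DihedralGroup.r i) => leftReg (CC A b) (a, Multiplicative.ofAdd (0, i))
  | (a, DihedralGroup.sr i) => iotaP A b * leftReg (CC A b) (a, Multiplicative.ofAdd (1, i))

lemma psiFun_r (a : A) (i : ZMod b) (c : CC A b) :
    psiFun A b (a, DihedralGroup.r i) c = (a, Multiplicative.ofAdd ((0 : ZMod 2), i)) * c := rfl

lemma psiFun_sr (a : A) (i : ZMod b) (c : CC A b) :
    psiFun A b (a, DihedralGroup.sr i) c =
      iotaP A b ((a, Multiplicative.ofAdd ((1 : ZMod 2), i)) * c) := rfl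

lemma psiFun_mul (x y : A × DihedralGroup b) :
    psiFun A b (x * y) = psiFun A b x * psiFun A b y := by
  obtain ⟨a, i | i⟩ := x <;> obtain ⟨a', j | j⟩ := y <;>
    ext c : 2 <;>
    simp only [Prod.mk_mul_mk, DihedralGroup.r_mul_r, DihedralGroup.r_mul_sr,
      DihedralGroup.sr_mul_r, DihedralGroup.sr_mul_sr, Equiv.Perm.mul_apply,
      psiFun_r, psiFun_sr, iotaP_apply, iotaP_mul, Prod.ext_iff, Prod.fst_mul, Prod.snd_mul]
  all_goals
    first
    | · apply Multiplicative.toAdd.injective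
        simp only [toAdd_mul, toAdd_inv, toAdd_ofAdd]
        apply Prod.ext <;> simp <;> ring
      | · apply Multiplicative.toAdd.injective
          simp only [toAdd_mul, toAdd_inv, toAdd_ofAdd]
          apply Prod.ext <;> simp only [Prod.fst_add, Prod.snd_add, Prod.fst_neg, Prod.snd_neg] <;> ring
    | simp [mul_assoc]

def psiHom : A × DihedralGroup b →* Equiv.Perm (CC A b) :=
  MonoidHom.mk' (psiFun A b) (psiFun_mul A b)

end Master

section Master2

variable (A : Type*) [CommGroup A] (b : ℕ)

lemma zmod2_cases : ∀ z : ZMod 2, z = 0 ∨ z = 1 := by decide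

lemma psi_one_r (a : A) (i : ZMod b) :
    psiHom A b (a, DihedralGroup.r i) 1 = (a, Multiplicative.ofAdd ((0 : ZMod 2), i)) := by
  show (a, Multiplicative.ofAdd ((0 : ZMod 2), i)) * 1 = _
  rw [mul_one]

lemma psi_one_sr (a : A) (i : ZMod b) :
    psiHom A b (a, DihedralGroup.sr i) 1 = (a, Multiplicative.ofAdd ((1 : ZMod 2), -i)) := by
  show iotaP A b ((a, Multiplicative.ofAdd ((1 : ZMod 2), i)) * 1) = _
  rw [mul_one, iotaP_apply]
  have h2 : (Multiplicative.ofAdd ((1 : ZMod 2), i))⁻¹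
      = Multiplicative.ofAdd ((1 : ZMod 2), -i) := by
    apply Multiplicative.toAdd.injective
    simp only [toAdd_inv, toAdd_ofAdd]
    simp only [Prod.ext_iff, Prod.fst_neg, Prod.snd_neg]
    exact ⟨by decide, trivial⟩
  exact Prod.ext rfl h2

lemma psi_bij : Function.Bijective (fun n : A × DihedralGroup b => psiHom A b n 1) := by
  constructor
  · rintro ⟨a, i | i⟩ ⟨a', j | j⟩ hij <;>
      simp only [psi_one_r, psi_one_sr, Prod.mk.injEq] at hij
    · obtain ⟨h1, h2⟩ := hij
      have := Multiplicative.ofAdd.injective h2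
      simp only [Prod.mk.injEq] at this
      simp [h1, this.2]
    · obtain ⟨-, h2⟩ := hij
      have := Multiplicative.ofAdd.injective h2
      simp only [Prod.mk.injEq] at this
      exact absurd this.1 (by decide)
    · obtain ⟨-, h2⟩ := hij
      have := Multiplicative.ofAdd.injective h2
      simp only [Prod.mk.injEq] at this
      exact absurd this.1 (by decide)
    · obtain ⟨h1, h2⟩ := hij
      have := Multiplicative.ofAdd.injective h2
      simp only [Prod.mk.injEq] at this
      have := neg_injective this.2
      simp [h1, this]
  · rintro ⟨a, x⟩
    rcases zmod2_cases (Multiplicative.toAdd x).1 with h | h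
    · refine ⟨(a, DihedralGroup.r (Multiplicative.toAdd x).2), ?_⟩
      simp only [psi_one_r]
      refine Prod.ext rfl ?_
      show Multiplicative.ofAdd _ = x
      rw [← h]
      simp
    · refine ⟨(a, DihedralGroup.sr (-(Multiplicative.toAdd x).2)), ?_⟩
      simp only [psi_one_sr]
      refine Prod.ext rfl ?_
      show Multiplicative.ofAdd _ = x
      rw [neg_neg, ← h]
      simp

end Master2

section Master3

variable (A : Type*) [CommGroup A] (b : ℕ)

lemma psi_norm [IsCyclic (CC A b)] :
    ∀ g ∈ Hol (CC A b), ∀ n : A × DihedralGroup b,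
      g * psiHom A b n * g⁻¹ ∈ (psiHom A b).range := by
  intro g hg n
  obtain ⟨c, α, hαbij, hga⟩ := hol_decomp hg
  obtain ⟨m, hm⟩ := MonoidHom.map_cyclic α
  -- m is odd
  have hodd : ((m : ℤ) : ZMod 2) = 1 := by
    rcases zmod2_cases ((m : ℤ) : ZMod 2) with h0 | h1
    · exfalso
      set t : CC A b := ((1 : A), Multiplicative.ofAdd ((1 : ZMod 2), (0 : ZMod b))) with hts
      have htm : α t = 1 := by
        rw [hm t]
        refine Prod.ext (by simpa [hts] using one_zpow (α := A) m) ?_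
        show t.2 ^ m = 1
        apply Multiplicative.toAdd.injective
        rw [toAdd_zpow]
        show m • ((1 : ZMod 2), (0 : ZMod b)) = 0
        refine Prod.ext ?_ ?_
        · show m • (1 : ZMod 2) = 0
          rw [zsmul_eq_mul, h0, zero_mul]
        · show m • (0 : ZMod b) = 0
          rw [smul_zero]
      have := hαbij.1 (htm.trans (map_one α).symm)
      have h2 := congrArg (fun z : CC A b => (Multiplicative.toAdd z.2).1) this
      simp [hts] at h2
    · exact h1
  have hcomm : ∀ y : CC A b, α (iotaP A b y) = iotaP A b (α y) := by
    intro y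
    rw [hm y, hm (iotaP A b y)]
    refine Prod.ext rfl ?_
    show (y.2⁻¹) ^ m = (y.2 ^ m)⁻¹
    exact inv_zpow y.2 m
  obtain ⟨a, i | i⟩ := n
  · -- rotation case
    set d : CC A b := (a, Multiplicative.ofAdd ((0 : ZMod 2), i)) with hds
    have hd1 : (Multiplicative.toAdd (α d).2).1 = 0 := by
      rw [hm d]
      show (Multiplicative.toAdd (d.2 ^ m)).1 = 0
      rw [toAdd_zpow]
      show (m • ((0 : ZMod 2), i)).1 = 0
      show m • (0 : ZMod 2) = 0
      rw [smul_zero]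
    have hαd : ((α d).1, Multiplicative.ofAdd ((0 : ZMod 2), (Multiplicative.toAdd (α d).2).2))
        = α d := by
      refine Prod.ext rfl ?_
      show Multiplicative.ofAdd _ = (α d).2
      rw [← hd1]
      simp
    refine ⟨((α d).1, DihedralGroup.r (Multiplicative.toAdd (α d).2).2), ?_⟩
    rw [eq_mul_inv_iff_mul_eq]
    refine Equiv.ext fun x => ?_
    rw [Equiv.Perm.mul_apply, Equiv.Perm.mul_apply]
    show psiFun A b ((α d).1, DihedralGroup.r (Multiplicative.toAdd (α d).2).2) (g x)
        = g (psiFun A b (a, DihedralGroup.r i) x)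
    rw [psiFun_r, psiFun_r, hαd, hga x, hga (d * x), map_mul]
    exact mul_left_comm (α d) c (α x)
  · -- reflection case
    set d : CC A b := (a, Multiplicative.ofAdd ((1 : ZMod 2), i)) with hds
    set w : CC A b := iotaP A b c * α d * c⁻¹ with hws
    have hd1 : (Multiplicative.toAdd (α d).2).1 = 1 := by
      rw [hm d]
      show (Multiplicative.toAdd (d.2 ^ m)).1 = 1
      rw [toAdd_zpow]
      show m • (1 : ZMod 2) = 1
      rw [zsmul_eq_mul, hodd, one_mul]
    have hw1 : (Multiplicative.toAdd w.2).1 = 1 := by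
      have : w.2 = c.2⁻¹ * (α d).2 * c.2⁻¹ := rfl
      rw [this]
      simp only [toAdd_mul, toAdd_inv, Prod.fst_add, Prod.fst_neg, hd1]
      have : ∀ e : ZMod 2, -e + 1 + -e = 1 := by decide
      exact this _
    have hw : ((w.1 : A), Multiplicative.ofAdd ((1 : ZMod 2), (Multiplicative.toAdd w.2).2))
        = w := by
      refine Prod.ext rfl ?_
      show Multiplicative.ofAdd _ = w.2
      rw [← hw1]
      simp
    refine ⟨(w.1, DihedralGroup.sr (Multiplicative.toAdd w.2).2), ?_⟩
    rw [eq_mul_inv_iff_mul_eq]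
    refine Equiv.ext fun x => ?_
    rw [Equiv.Perm.mul_apply, Equiv.Perm.mul_apply]
    show psiFun A b (w.1, DihedralGroup.sr (Multiplicative.toAdd w.2).2) (g x)
        = g (psiFun A b (a, DihedralGroup.sr i) x)
    rw [psiFun_sr, psiFun_sr, hw, hga x, hga (iotaP A b (d * x))]
    have h1 : w * (c * α x) = iotaP A b c * (α d * α x) := by
      rw [hws, mul_assoc (iotaP A b c * α d), inv_mul_cancel_left, mul_assoc]
    rw [h1, iotaP_mul, iotaP_iota, iotaP_mul, hcomm (d * x), map_mul α d x, iotaP_mul]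
end Master3

lemma master {G : Type*} [Group G] (A : Type*) [CommGroup A] (b : ℕ)
    [IsCyclic (CC A b)] (h : EmbedsTransitively G (CC A b)) :
    EmbedsTransitively G (A × DihedralGroup b) :=
  transfer (psiHom A b) (psi_bij A b) (psi_norm A b) h

lemma embedsTransitively_of_mulEquiv {G N₁ N₂ : Type*} [Group G] [Group N₁] [Group N₂]
    (e : N₁ ≃* N₂) (h : EmbedsTransitively G N₁) : EmbedsTransitively G N₂ := by
  apply transfer ((leftReg N₁).comp e.symm.toMonoidHom) ?_ ?_ h
  · have h1 : (fun n : N₂ => ((leftReg N₁).comp e.symm.toMonoidHom) n 1)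
        = fun n => e.symm n := by
      funext n; exact mul_one _
    rw [h1]; exact e.symm.bijective
  · intro g hg n
    have h1 : g * leftReg N₁ (e.symm n) * g⁻¹ ∈ (leftReg N₁).range :=
      (Subgroup.mem_normalizer_iff.mp hg _).mp ⟨e.symm n, rfl⟩
    obtain ⟨d, hd⟩ := h1
    exact ⟨e d, by simpa using hd⟩

def multProd (β γ : Type*) [AddGroup β] [AddGroup γ] :
    Multiplicative (β × γ) ≃* Multiplicative β × Multiplicative γ where
  toFun x := (Multiplicative.ofAdd (Multiplicative.toAdd x).1,
    Multiplicative.ofAdd (Multiplicative.toAdd x).2)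
  invFun x := Multiplicative.ofAdd (Multiplicative.toAdd x.1, Multiplicative.toAdd x.2)
  left_inv x := rfl
  right_inv x := rfl
  map_mul' x y := rfl

theorem embeds_cyclic_implies_embeds_others (p q : ℕ) (hp : p.Prime) (hq : q.Prime)
    (hpodd : Odd p) (hqodd : Odd q) (hlt : q < p)
    (G : Type*) [Group G] [Finite G]
    (h : EmbedsTransitively G (Multiplicative (ZMod (2 * p * q)))) :
    EmbedsTransitively G (Multiplicative (ZMod p) × DihedralGroup q) ∧
    EmbedsTransitively G (Multiplicative (ZMod q) × DihedralGroup p) ∧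
    EmbedsTransitively G (DihedralGroup (p * q)) := by
  have hpq : p ≠ q := ne_of_gt hlt
  have c2p : Nat.Coprime 2 p := Nat.coprime_two_left.mpr hpodd
  have c2q : Nat.Coprime 2 q := Nat.coprime_two_left.mpr hqodd
  have cpq : Nat.Coprime p q := (Nat.coprime_primes hp hq).mpr hpq
  have c2pq : Nat.Coprime (2 * p) q := Nat.Coprime.mul c2q cpq
  have c2_pq : Nat.Coprime 2 (p * q) := Nat.Coprime.mul_right c2p c2q
  -- the base additive CRT equivalence  ZMod (2pq) ≃ (ZMod 2 × ZMod p) × ZMod q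
  have base : ZMod (2 * p * q) ≃+ (ZMod 2 × ZMod p) × ZMod q :=
    (ZMod.chineseRemainder c2pq).toAddEquiv.trans
      (AddEquiv.prodCongr (ZMod.chineseRemainder c2p).toAddEquiv (AddEquiv.refl _))
  refine ⟨?_, ?_, ?_⟩
  · -- C_p × D_q
    have e1 : Multiplicative (ZMod (2 * p * q)) ≃*
        CC (Multiplicative (ZMod p)) q := by
      refine (AddEquiv.toMultiplicative ?_).trans (multProd _ _)
      exact base.trans
        ((AddEquiv.prodCongr (AddEquiv.prodComm) (AddEquiv.refl _)).trans
          (AddEquiv.prodAssoc))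
    have : IsCyclic (CC (Multiplicative (ZMod p)) q) :=
      isCyclic_of_surjective e1 e1.surjective
    exact master _ q (embedsTransitively_of_mulEquiv e1 h)
  · -- C_q × D_p
    have e2 : Multiplicative (ZMod (2 * p * q)) ≃*
        CC (Multiplicative (ZMod q)) p := by
      refine (AddEquiv.toMultiplicative ?_).trans (multProd _ _)
      exact base.trans AddEquiv.prodComm
    have : IsCyclic (CC (Multiplicative (ZMod q)) p) :=
      isCyclic_of_surjective e2 e2.surjective
    exact master _ p (embedsTransitively_of_mulEquiv e2 h)
  · -- D_pq
    have e3 : Multiplicative (ZMod (2 * p * q)) ≃*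
        CC (Multiplicative (ZMod 1)) (p * q) := by
      have eadd : ZMod (2 * p * q) ≃+ ZMod 2 × ZMod (p * q) :=
        (ZMod.ringEquivCongr (mul_assoc 2 p q)).toAddEquiv.trans
          (ZMod.chineseRemainder c2_pq).toAddEquiv
      exact (AddEquiv.toMultiplicative eadd).trans
        (MulEquiv.uniqueProd (M := Multiplicative (ZMod 2 × ZMod (p * q)))
          (N := Multiplicative (ZMod 1))).symm
    have : IsCyclic (CC (Multiplicative (ZMod 1)) (p * q)) :=
      isCyclic_of_surjective e3 e3.surjective
    have h3 := master _ (p * q) (embedsTransitively_of_mulEquiv e3 h)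
    exact embedsTransitively_of_mulEquiv
      (MulEquiv.uniqueProd (M := DihedralGroup (p * q)) (N := Multiplicative (ZMod 1))) h3
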